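/- arXiv:math/0112034 — 3 statements merged into one kernel-verified Lean document; each statement's English description precedes it below -/
import Mathlib

section
/- For all groves of planar binary trees A and B, σ(A + B) = σ(B) + σ(A), where σ is the involution given by reflection of trees. -/
/-- A planar binary tree: a leaf `|` or a grafting `x ∨ y`. -/
inductive PBT : Type
  | leaf : PBT
  | node : PBT → PBT → PBT
  deriving DecidableEq

namespace PBT

/-- The degree: number of internal vertices. -/
def deg : PBT → ℕ
  | leaf => 0
  | node l r => deg l + deg r + 1

/-- The set `Y n` of planar binary trees of degree `n`. -/
def Y (n : ℕ) : Set PBT := {t | t.deg = n}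

/-- The `over` operation `x / y`. -/
def over' : PBT → PBT → PBT
  | x, leaf => x
  | x, node yl yr => node (over' x yl) yr

/-- The `under` operation `x \ y`. -/
def under : PBT → PBT → PBT
  | leaf, y => y
  | node xl xr, y => node xl (under xr y)

/-- The Tamari order, generated by `(x ∨ y) ∨ z ≤ x ∨ (y ∨ z)` and compatibility
with grafting on both sides. -/
inductive tle : PBT → PBT → Prop
  | refl (x : PBT) : tle x x
  | trans {x y z : PBT} : tle x y → tle y z → tle x z
  | rotate (x y z : PBT) : tle (node (node x y) z) (node x (node y z))
  | node_left {x y : PBT} (z : PBT) : tle x y → tle (node x z) (node y z)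
  | node_right {x y : PBT} (z : PBT) : tle x y → tle (node z x) (node z y)

/-- The sum of two planar binary trees: the Tamari interval `[x/y, x\y]`
(a subset of `Y (deg x + deg y)`). -/
def sum (x y : PBT) : Set PBT := {z | tle (over' x y) z ∧ tle z (under x y)}

/-- A grove of degree `n`: a nonempty subset of `Y n`. -/
def Grove (n : ℕ) (A : Set PBT) : Prop := A.Nonempty ∧ ∀ x ∈ A, x.deg = n

/-- The sum of groves. -/
def gsum (A B : Set PBT) : Set PBT := ⋃ x ∈ A, ⋃ y ∈ B, sum x y

/-- The reflection involution σ. -/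
def σ : PBT → PBT
  | leaf => leaf
  | node l r => node (σ r) (σ l)

/-- The left sum `x ⊣ y` of trees (with the conventions `x ⊣ | = {x}`, `| ⊣ y = {|}`). -/
def lsum : PBT → PBT → Set PBT
  | x, leaf => {x}
  | leaf, _ => {leaf}
  | node xl xr, y => (fun z => node xl z) '' sum xr y

/-- The right sum `x ⊢ y` of trees (with the conventions `| ⊢ y = {y}`, `x ⊢ | = {|}`). -/
def rsum : PBT → PBT → Set PBT
  | leaf, y => {y}
  | _, leaf => {leaf}
  | x, node yl yr => (fun z => node z yr) '' sum x yl

/-- Left sum of groves. -/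
def glsum (A B : Set PBT) : Set PBT := ⋃ x ∈ A, ⋃ y ∈ B, lsum x y

/-- Right sum of groves. -/
def grsum (A B : Set PBT) : Set PBT := ⋃ x ∈ A, ⋃ y ∈ B, rsum x y

/-- Multiplication of a tree by a grove:
`| × B = {|}` and `(xˡ ∨ xʳ) × B = ((xˡ × B) ⊢ B) ⊣ (xʳ × B)`.
(The conventions `{|} ⊢ B = B` and `A ⊣ {|} = A` are built into `rsum`/`lsum`.) -/
def tmul : PBT → Set PBT → Set PBT
  | leaf, _ => {leaf}
  | node l r, B => glsum (grsum (tmul l B) B) (tmul r B)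

/-- Multiplication of groves. -/
def gmul (A B : Set PBT) : Set PBT := ⋃ x ∈ A, tmul x B

end PBT


namespace PBT

lemma sigma_sigma (x : PBT) : σ (σ x) = x := by
  induction x with
  | leaf => rfl
  | node l r ihl ihr => simp [σ, ihl, ihr]

lemma sigma_over (x y : PBT) : σ (over' x y) = under (σ y) (σ x) := by
  induction y with
  | leaf => rfl
  | node yl yr ihl ihr => simp [over', σ, under, ihl]

lemma sigma_under (x y : PBT) : σ (under x y) = over' (σ y) (σ x) := by
  induction x with
  | leaf => rfl
  | node xl xr ihl ihr => simp [under, σ, over', ihr]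

lemma sigma_tle {x y : PBT} (h : tle x y) : tle (σ y) (σ x) := by
  induction h with
  | refl x => exact tle.refl _
  | trans _ _ ih1 ih2 => exact tle.trans ih2 ih1
  | rotate x y z => exact tle.rotate _ _ _
  | node_left z _ ih => exact tle.node_right _ ih
  | node_right z _ ih => exact tle.node_left _ ih

lemma sigma_sum (x y : PBT) : σ '' sum x y = sum (σ y) (σ x) := by
  ext z
  constructor
  · rintro ⟨w, ⟨h1, h2⟩, rfl⟩
    exact ⟨by rw [← sigma_under]; exact sigma_tle h2,
           by rw [← sigma_over]; exact sigma_tle h1⟩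
  · rintro ⟨h1, h2⟩
    refine ⟨σ z, ⟨?_, ?_⟩, sigma_sigma z⟩
    · have := sigma_tle h2
      rwa [sigma_under, sigma_sigma, sigma_sigma] at this
    · have := sigma_tle h1
      rwa [sigma_over, sigma_sigma, sigma_sigma] at this

end PBT

open PBT in
/-- for all groves `A`, `B`, `σ(A + B) = σ(B) + σ(A)`. -/
theorem sigma_gsum (n m : ℕ) (A B : Set PBT) (hA : Grove n A) (hB : Grove m B) :
    σ '' gsum A B = gsum (σ '' B) (σ '' A) := by
  ext z
  simp only [gsum, Set.mem_image, Set.mem_iUnion]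
  constructor
  · rintro ⟨w, ⟨x, hx, y, hy, hw⟩, rfl⟩
    refine ⟨σ y, ⟨y, hy, rfl⟩, σ x, ⟨x, hx, rfl⟩, ?_⟩
    rw [← sigma_sum]; exact ⟨w, hw, rfl⟩
  · rintro ⟨_, ⟨y, hy, rfl⟩, _, ⟨x, hx, rfl⟩, hz⟩
    rw [← sigma_sum] at hz
    obtain ⟨w, hw, rfl⟩ := hz
    exact ⟨w, ⟨x, hx, y, hy, hw⟩, rfl⟩
end

section
/- For all planar binary trees x = x^l ∨ x^r and y = y^l ∨ y^r, both different from the leaf |, the following recursive formula holds: x + y = { x^l ∨ z : z ∈ x^r + y } ∪ { z ∨ y^r : z ∈ x + y^l }. -/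
namespace PBT

/-- The right-spine list of a tree. -/
def rcL : PBT → List PBT
  | leaf => []
  | node l r => l :: rcL r

/-- Rebuild a tree from a right-spine list. -/
def rcT : List PBT → PBT
  | [] => leaf
  | c :: cs => node c (rcT cs)

/-- Join a nonempty list into a tree along the right spine (no trailing leaf). -/
def rcJ : List PBT → PBT
  | [] => leaf
  | [c] => c
  | c :: d :: cs => node c (rcJ (d :: cs))

@[simp] lemma rcJ_nil : rcJ [] = leaf := rfl
@[simp] lemma rcJ_single (c : PBT) : rcJ [c] = c := rfl

lemma rcJ_cons (c : PBT) {l : List PBT} (h : l ≠ []) : rcJ (c :: l) = node c (rcJ l) := by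
  cases l with
  | nil => exact absurd rfl h
  | cons d cs => rfl

@[simp] lemma rcT_rcL : ∀ t, rcT (rcL t) = t
  | leaf => rfl
  | node l r => by simp [rcL, rcT, rcT_rcL r]

lemma rcL_under : ∀ x y, rcL (under x y) = rcL x ++ rcL y
  | leaf, y => rfl
  | node a b, y => by simp [under, rcL, rcL_under b y]

@[simp] lemma under_leaf : ∀ t, under t leaf = t
  | leaf => rfl
  | node a b => by simp [under, under_leaf b]

lemma rcJ_append_last : ∀ (cs : List PBT) (t : PBT), rcJ (cs ++ [t]) = under (rcT cs) t
  | [], t => rfl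
  | c :: cs, t => by
      rw [List.cons_append, rcJ_cons c (by simp), rcJ_append_last cs t]
      rfl

/-- weight of a list: total degree plus length. -/
def wl (cs : List PBT) : ℕ := (cs.map (fun c => c.deg + 1)).sum

@[simp] lemma wl_nil : wl [] = 0 := rfl
@[simp] lemma wl_cons (c : PBT) (cs : List PBT) : wl (c :: cs) = deg c + 1 + wl cs := by
  simp [wl]
@[simp] lemma wl_append (cs ds : List PBT) : wl (cs ++ ds) = wl cs + wl ds := by
  simp [wl]

lemma wl_rcL : ∀ t, wl (rcL t) = deg t
  | leaf => rfl
  | node l r => by simp [rcL, deg, wl_rcL r]; omega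

lemma wl_eq_zero {cs : List PBT} (h : wl cs = 0) : cs = [] := by
  cases cs with
  | nil => rfl
  | cons c cs => simp at h

lemma deg_rcJ : ∀ (cs : List PBT), cs ≠ [] → deg (rcJ cs) + 1 = wl cs
  | [c], _ => by simp
  | c :: d :: cs, _ => by
      rw [rcJ_cons c (by simp)]
      have := deg_rcJ (d :: cs) (by simp)
      simp [deg] at *
      omega

lemma deg_tle {a b : PBT} (h : tle a b) : deg a = deg b := by
  induction h with
  | refl => rfl
  | trans _ _ ih1 ih2 => omega
  | rotate x y z => simp [deg]; omega
  | node_left z _ ih => simp [deg]; omega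
  | node_right z _ ih => simp [deg]; omega

@[simp] lemma σ_σ : ∀ t, σ (σ t) = t
  | leaf => rfl
  | node l r => by simp [σ, σ_σ l, σ_σ r]

lemma deg_σ : ∀ t, deg (σ t) = deg t
  | leaf => rfl
  | node l r => by simp [σ, deg, deg_σ l, deg_σ r]; omega

lemma tle_σ {a b : PBT} (h : tle a b) : tle (σ b) (σ a) := by
  induction h with
  | refl => exact tle.refl _
  | trans h1 h2 ih1 ih2 => exact tle.trans ih2 ih1
  | rotate x y z => simpa [σ] using tle.rotate (σ z) (σ y) (σ x)
  | node_left z h ih => exact tle.node_right _ ih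
  | node_right z h ih => exact tle.node_left _ ih

lemma tle_σ_rev {a b : PBT} (h : tle (σ a) (σ b)) : tle b a := by
  simpa using tle_σ h

lemma σ_over : ∀ x y, σ (over' x y) = under (σ y) (σ x)
  | x, leaf => rfl
  | x, node yl yr => by simp [over', under, σ, σ_over x yl]

end PBT
namespace PBT

/-- Block partition refinement witnessing the Tamari order on right-spine lists. -/
inductive part : List PBT → List PBT → Prop
  | nil : part [] []
  | cons {a : PBT} {B as rest : List PBT} (hB : B ≠ []) (ht : tle a (rcJ B))
      (hp : part as rest) : part (a :: as) (B ++ rest)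

lemma part_refl : ∀ cs : List PBT, part cs cs
  | [] => part.nil
  | c :: cs => by
      have := part.cons (B := [c]) (by simp) (by simpa using tle.refl c) (part_refl cs)
      simpa using this

lemma part_nil_inv {L : List PBT} (h : part [] L) : L = [] := by cases h; rfl

lemma part_cons_inv {a : PBT} {as L : List PBT} (h : part (a :: as) L) :
    ∃ B rest, B ≠ [] ∧ tle a (rcJ B) ∧ part as rest ∧ L = B ++ rest := by
  cases h with
  | cons hB ht hp => exact ⟨_, _, hB, ht, hp, rfl⟩

lemma part_ne_nil {as bs : List PBT} (h : part as bs) (ha : as ≠ []) : bs ≠ [] := by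
  cases as with
  | nil => exact absurd rfl ha
  | cons a as =>
      obtain ⟨B, rest, hB, _, _, rfl⟩ := part_cons_inv h
      simp [hB]

lemma part_append {as bs cs ds : List PBT} (h1 : part as bs) (h2 : part cs ds) :
    part (as ++ cs) (bs ++ ds) := by
  induction h1 with
  | nil => simpa using h2
  | cons hB ht hp ih =>
      rw [List.cons_append, List.append_assoc]
      exact part.cons hB ht ih

lemma part_split : ∀ {as1 as2 bs : List PBT}, part (as1 ++ as2) bs →
    ∃ bs1 bs2, bs = bs1 ++ bs2 ∧ part as1 bs1 ∧ part as2 bs2 := by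
  intro as1
  induction as1 with
  | nil => intro as2 bs h; exact ⟨[], bs, rfl, part.nil, h⟩
  | cons a as1 ih =>
      intro as2 bs h
      obtain ⟨B, rest, hB, ht, hp, rfl⟩ := part_cons_inv h
      obtain ⟨bs1, bs2, rfl, hp1, hp2⟩ := ih hp
      exact ⟨B ++ bs1, bs2, by rw [List.append_assoc], part.cons hB ht hp1, hp2⟩

lemma rcJ_flatten : ∀ (B : List PBT), B ≠ [] → ∀ (rest : List PBT), rest ≠ [] →
    tle (node (rcJ B) (rcJ rest)) (rcJ (B ++ rest))
  | [b], _ => by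
      intro rest hrest
      rw [List.singleton_append, rcJ_cons b hrest]
      exact tle.refl _
  | b :: c :: B', _ => by
      intro rest hrest
      rw [rcJ_cons b (by simp)]
      have h1 := tle.rotate b (rcJ (c :: B')) (rcJ rest)
      have h2 := tle.node_right b (rcJ_flatten (c :: B') (by simp) rest hrest)
      have h3 : rcJ ((b :: c :: B') ++ rest) = node b (rcJ ((c :: B') ++ rest)) := by
        rw [List.cons_append, rcJ_cons b (by simp)]
      rw [h3]
      exact h1.trans h2

lemma rcJ_mono {bs cs : List PBT} (h : part bs cs) (hne : bs ≠ []) :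
    tle (rcJ bs) (rcJ cs) := by
  induction h with
  | nil => exact absurd rfl hne
  | @cons a B as rest hB ht hp ih =>
      cases as with
      | nil =>
          rw [part_nil_inv hp, List.append_nil]
          simpa using ht
      | cons a' as' =>
          have hrest : rest ≠ [] := part_ne_nil hp (by simp)
          rw [rcJ_cons a (by simp)]
          have h1 : tle (node a (rcJ (a' :: as'))) (node a (rcJ rest)) :=
            tle.node_right a (ih (by simp))
          have h2 : tle (node a (rcJ rest)) (node (rcJ B) (rcJ rest)) :=
            tle.node_left _ ht
          exact (h1.trans h2).trans (rcJ_flatten B hB rest hrest)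

lemma part_leaf : part [leaf] [leaf] := by
  have := part.cons (B := [leaf]) (by simp) (by simpa using tle.refl leaf) part.nil
  simpa using this

lemma rcT_eq_rcJ (cs : List PBT) : rcT cs = rcJ (cs ++ [leaf]) := by
  rw [rcJ_append_last, under_leaf]

lemma rcT_mono {cs ds : List PBT} (h : part cs ds) : tle (rcT cs) (rcT ds) := by
  rw [rcT_eq_rcJ, rcT_eq_rcJ]
  exact rcJ_mono (part_append h part_leaf) (by simp)

lemma part_trans {as bs cs : List PBT} (h1 : part as bs) (h2 : part bs cs) : part as cs := by
  induction h1 generalizing cs with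
  | nil => rw [part_nil_inv h2]; exact part.nil
  | @cons a B as' rest hB ht hp ih =>
      obtain ⟨cs1, cs2, rfl, hpB, hpr⟩ := part_split h2
      have hcs1 : cs1 ≠ [] := part_ne_nil hpB hB
      exact part.cons hcs1 (ht.trans (rcJ_mono hpB hB)) (ih hpr)

lemma tle_part {t u : PBT} (h : tle t u) : part (rcL t) (rcL u) := by
  induction h with
  | refl => exact part_refl _
  | trans _ _ ih1 ih2 => exact part_trans ih1 ih2
  | rotate x y z =>
      have := part.cons (B := [x, y]) (by simp) (by exact tle.refl (node x y))
        (part_refl (rcL z))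
      simpa [rcL] using this
  | @node_left x y z h ih =>
      have := part.cons (B := [y]) (by simp) (by simpa using h) (part_refl (rcL z))
      simpa [rcL] using this
  | @node_right x y z h ih =>
      have := part.cons (B := [z]) (by simp) (by simpa using tle.refl z) ih
      simpa [rcL] using this

lemma part_wl {as bs : List PBT} (h : part as bs) : wl as = wl bs := by
  induction h with
  | nil => rfl
  | @cons a B as rest hB ht hp ih =>
      have h1 := deg_tle ht
      have h2 := deg_rcJ B hB
      simp only [wl_cons, wl_append]
      omega

lemma tle_of_part_rcL {u v : PBT} (h : part (rcL u) (rcL v)) : tle u v := by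
  have := rcT_mono h
  simpa using this

lemma part_length_le {as bs : List PBT} (h : part as bs) : as.length ≤ bs.length := by
  induction h with
  | nil => simp
  | @cons a B as rest hB ht hp ih =>
      have : 1 ≤ B.length := by
        cases B with
        | nil => exact absurd rfl hB
        | cons _ _ => simp
      simp only [List.length_cons, List.length_append]
      omega

lemma part_forall2 {as bs : List PBT} (h : part as bs) (hl : bs.length ≤ as.length) :
    List.Forall₂ tle as bs := by
  induction h with
  | nil => exact List.Forall₂.nil
  | @cons a B as rest hB ht hp ih =>
      have hlr := part_length_le hp
      have hB1 : B.length = 1 := by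
        have : 1 ≤ B.length := by
          cases B with
          | nil => exact absurd rfl hB
          | cons _ _ => simp
        simp only [List.length_append, List.length_cons] at hl
        omega
      obtain ⟨b, rfl⟩ : ∃ b, B = [b] := by
        cases B with
        | nil => exact absurd rfl hB
        | cons b B' =>
            cases B' with
            | nil => exact ⟨b, rfl⟩
            | cons _ _ => simp at hB1
      refine List.Forall₂.cons (by simpa using ht) (ih ?_)
      simp only [List.length_append, List.length_cons] at hl
      omega

lemma mem_deg_lt : ∀ {c t : PBT}, c ∈ rcL t → deg c < deg t := by
  intro c t
  induction t with
  | leaf => intro h; simp [rcL] at h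
  | node l r ihl ihr =>
      intro h
      simp only [rcL, List.mem_cons] at h
      rcases h with rfl | h
      · simp [deg]
      · have := ihr h; simp [deg]; omega

theorem tle_antisymm : ∀ a b : PBT, tle a b → tle b a → a = b := by
  suffices H : ∀ n (a b : PBT), deg a ≤ n → tle a b → tle b a → a = b by
    intro a b h1 h2; exact H (deg a) a b le_rfl h1 h2
  intro n
  induction n with
  | zero =>
      intro a b hd h1 h2
      have hb : deg b = 0 := by have := deg_tle h1; omega
      have ha : deg a = 0 := by omega
      cases a with
      | leaf => cases b with
        | leaf => rfl
        | node _ _ => simp [deg] at hb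
      | node _ _ => simp [deg] at ha
  | succ n ih =>
      intro a b hd h1 h2
      have p1 := tle_part h1
      have p2 := tle_part h2
      have l1 := part_length_le p1
      have l2 := part_length_le p2
      have f1 := part_forall2 p1 (by omega)
      have f2 := part_forall2 p2 (by omega)
      have key : ∀ as bs : List PBT, List.Forall₂ tle as bs → List.Forall₂ tle bs as →
          (∀ c ∈ as, deg c ≤ n) → as = bs := by
        intro as bs g1
        induction g1 with
        | nil => intro _ _; rfl
        | @cons a b as' bs' hab g1' ih2 =>
            intro g2 hm
            cases g2 with
            | cons hba g2' =>
                have he : a = b := ih a b (hm a (by simp)) hab hba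
                have := ih2 g2' (fun c hc => hm c (by simp [hc]))
                rw [he, this]
      have hmem : ∀ c ∈ rcL a, deg c ≤ n := by
        intro c hc
        have := mem_deg_lt hc
        omega
      have hrc : rcL a = rcL b := key _ _ f1 f2 hmem
      calc a = rcT (rcL a) := (rcT_rcL a).symm
        _ = rcT (rcL b) := by rw [hrc]
        _ = b := rcT_rcL b

end PBT
namespace PBT

lemma over_le_node (xl xr : PBT) : ∀ y, tle (over' (node xl xr) y) (node xl (over' xr y))
  | leaf => tle.refl _
  | node a b => by
      show tle (node (over' (node xl xr) a) b) (node xl (over' xr (node a b)))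
      have h1 : tle (node (over' (node xl xr) a) b) (node (node xl (over' xr a)) b) :=
        tle.node_left b (over_le_node xl xr a)
      have h2 : tle (node (node xl (over' xr a)) b) (node xl (node (over' xr a) b)) :=
        tle.rotate _ _ _
      exact h1.trans h2

lemma node_le_under (yl yr : PBT) : ∀ x, tle (node (under x yl) yr) (under x (node yl yr))
  | leaf => tle.refl _
  | node a b => by
      show tle (node (node a (under b yl)) yr) (node a (under b (node yl yr)))
      exact (tle.rotate a (under b yl) yr).trans (tle.node_right a (node_le_under yl yr b))

lemma inner_case (xl xr yl yr zl zr : PBT) (B0 rest B0' rest' M : List PBT)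
    (hB0ne : B0 ≠ []) (hB0'ne : B0' ≠ [])
    (htl : tle zl (rcJ B0)) (hpr : part (rcL zr) rest)
    (htl' : tle (σ zr) (rcJ B0')) (hpr' : part (rcL (σ zl)) rest')
    (hx : rcL (node xl xr) = B0 ++ M) (hrest : rest = M ++ rcL (node yl yr))
    (heq' : rcL (σ (node yl yr)) ++ rcL (σ (node xl xr)) = B0' ++ rest') :
    zl = xl ∧ tle (over' xr (node yl yr)) zr ∧ tle zr (under xr (node yl yr)) := by
  -- split B0 = xl :: B2
  obtain ⟨B2, rfl⟩ : ∃ B2, B0 = xl :: B2 := by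
    cases B0 with
    | nil => exact absurd rfl hB0ne
    | cons c B2 =>
        rw [show rcL (node xl xr) = xl :: rcL xr from rfl, List.cons_append] at hx
        exact ⟨B2, by rw [(List.cons.injEq _ _ _ _).mp hx |>.1]⟩
  have hx2 : rcL xr = B2 ++ M := by
    rw [show rcL (node xl xr) = xl :: rcL xr from rfl, List.cons_append] at hx
    exact ((List.cons.injEq _ _ _ _).mp hx).2
  -- weights
  have wB2M : wl B2 + wl M = deg xr := by
    have := congrArg wl hx2
    rw [wl_rcL, wl_append] at this
    omega
  have hdzl : deg zl = deg xl + wl B2 := by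
    have e1 := deg_tle htl
    have e2 := deg_rcJ (xl :: B2) (by simp)
    rw [wl_cons] at e2
    omega
  have hdzr : deg zr = wl M + (deg yl + deg yr + 1) := by
    have e1 := part_wl hpr
    rw [wl_rcL, hrest, wl_append, wl_rcL] at e1
    simp only [deg] at e1
    omega
  have wrest' : wl rest' = deg zl := by
    have := part_wl hpr'
    rw [wl_rcL, deg_σ] at this
    omega
  have wB0' : deg zr + 1 = wl B0' := by
    have e1 := deg_tle htl'
    have e2 := deg_rcJ B0' hB0'ne
    rw [deg_σ] at e1
    omega
  rcases List.append_eq_append_iff.mp heq' with ⟨K, hB0'eq, hK⟩ | ⟨K, hyeq, hrest'eq⟩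
  · -- B0' = rcL (σ y) ++ K, rcL (σ x) = K ++ rest'
    have hK2 : σ xr :: rcL (σ xl) = K ++ rest' := by
      rw [show rcL (σ (node xl xr)) = σ xr :: rcL (σ xl) from rfl] at hK
      exact hK
    cases K with
    | nil =>
        exfalso
        simp only [List.nil_append] at hK2
        have : wl rest' = deg xr + 1 + deg xl := by
          rw [← hK2, wl_cons, wl_rcL, deg_σ, deg_σ]
        omega
    | cons k K2 =>
        have hk : k = σ xr := ((List.cons.injEq _ _ _ _).mp (by
          rw [List.cons_append] at hK2; exact hK2)).1.symm
        have hK2' : rcL (σ xl) = K2 ++ rest' := ((List.cons.injEq _ _ _ _).mp (by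
          rw [List.cons_append] at hK2; exact hK2)).2
        subst hk
        -- weights force B2 = [] and K2 = []
        have wB0'2 : wl B0' = (deg yl + deg yr + 1) + (deg xr + 1 + wl K2) := by
          rw [hB0'eq, wl_append, wl_rcL, deg_σ, wl_cons, deg_σ]
          simp only [deg]
        have hz : wl B2 = 0 ∧ wl K2 = 0 := by omega
        have hB2 : B2 = [] := wl_eq_zero hz.1
        have hK2'' : K2 = [] := wl_eq_zero hz.2
        subst hB2; subst hK2''
        simp only [List.nil_append] at hx2 hK2'
        -- conclusions
        have c1 : tle zl xl := by simpa using htl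
        have c2 : tle xl zl := by
          have : part (rcL (σ zl)) (rcL (σ xl)) := by rw [hK2']; exact hpr'
          exact tle_σ_rev (tle_of_part_rcL this)
      -- zr bounds
        have c3 : tle zr (under xr (node yl yr)) := by
          apply tle_of_part_rcL
          rw [rcL_under, hx2, ← hrest]
          exact hpr
        have c4 : tle (over' xr (node yl yr)) zr := by
          apply tle_σ_rev
          have e : rcJ B0' = σ (over' xr (node yl yr)) := by
            rw [σ_over, hB0'eq, rcJ_append_last, rcT_rcL]
          rw [e] at htl'
          exact htl'
        exact ⟨tle_antisymm zl xl c1 c2, c4, c3⟩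
  · -- rcL (σ y) = B0' ++ K : weight contradiction
    exfalso
    have e1 : deg yl + deg yr + 1 = wl B0' + wl K := by
      have := congrArg wl hyeq
      rw [wl_rcL, deg_σ, wl_append] at this
      simpa [deg] using this
    have e2 : wl rest' = wl K + (deg xl + deg xr + 1) := by
      rw [hrest'eq, wl_append, wl_rcL, deg_σ]
      simp [deg]
    omega

end PBT
open PBT in
/-- for `x = xˡ ∨ xʳ` and `y = yˡ ∨ yʳ`,
`x + y = {xˡ ∨ z : z ∈ xʳ + y} ∪ {z ∨ yʳ : z ∈ x + yˡ}`. -/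
theorem sum_rec (xl xr yl yr : PBT) :
    PBT.sum (node xl xr) (node yl yr) =
      ((fun z => node xl z) '' PBT.sum xr (node yl yr)) ∪
      ((fun z => node z yr) '' PBT.sum (node xl xr) yl) := by
  ext z
  simp only [Set.mem_union, Set.mem_image]
  constructor
  · rintro ⟨hlo, hhi⟩
    cases z with
    | leaf =>
        exfalso
        have h := tle_part hhi
        have h2 := part_nil_inv (show part [] (rcL (under (node xl xr) (node yl yr))) from h)
        rw [rcL_under] at h2
        simp [rcL] at h2
    | node zl zr =>
        have pU := tle_part hhi
        rw [show rcL (node zl zr) = zl :: rcL zr from rfl, rcL_under] at pU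
        obtain ⟨B0, rest, hB0ne, htl, hpr, heq⟩ := part_cons_inv pU
        have hloσ : tle (σ (node zl zr)) (σ (over' (node xl xr) (node yl yr))) := tle_σ hlo
        rw [σ_over] at hloσ
        have pL := tle_part hloσ
        rw [show rcL (σ (node zl zr)) = σ zr :: rcL (σ zl) from rfl, rcL_under] at pL
        obtain ⟨B0', rest', hB0'ne, htl', hpr', heq'⟩ := part_cons_inv pL
        rcases List.append_eq_append_iff.mp heq with ⟨M, hB0eq, hresteq⟩ | ⟨M, hxeq, hresteq⟩
        · cases M with
          | nil =>
              left
              obtain ⟨he, h1, h2⟩ := inner_case xl xr yl yr zl zr B0 rest B0' rest' []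
                hB0ne hB0'ne htl hpr htl' hpr'
                (by rw [hB0eq]; simp) (by rw [List.nil_append, ← List.nil_append rest]; exact hresteq.symm) heq'
              exact ⟨zr, ⟨h1, h2⟩, by rw [he]⟩
          | cons m M2 =>
              right
              -- FORM2 : B0 = rcL x ++ (m :: M2), rcL y = (m :: M2) ++ rest
              have hm : yl = m ∧ rcL yr = M2 ++ rest := by
                rw [show rcL (node yl yr) = yl :: rcL yr from rfl, List.cons_append] at hresteq
                exact (List.cons.injEq _ _ _ _).mp hresteq
              obtain ⟨hm1, hyr⟩ := hm
              rw [← hm1] at hB0eq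
              -- weights
              have wrest : wl rest = deg zr := by
                have := part_wl hpr
                rw [wl_rcL] at this
                omega
              have wyr : deg yr = wl M2 + wl rest := by
                have := congrArg wl hyr
                rw [wl_rcL, wl_append] at this
                omega
              obtain ⟨B2', rfl⟩ : ∃ B2', B0' = σ yr :: B2' := by
                cases B0' with
                | nil => exact absurd rfl hB0'ne
                | cons c B2' =>
                    rw [show rcL (σ (node yl yr)) = σ yr :: rcL (σ yl) from rfl,
                      List.cons_append, List.cons_append] at heq'
                    exact ⟨B2', by rw [(List.cons.injEq _ _ _ _).mp heq' |>.1]⟩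
              have hινσ : rcL (σ yl) ++ rcL (σ (node xl xr)) = B2' ++ rest' := by
                rw [show rcL (σ (node yl yr)) = σ yr :: rcL (σ yl) from rfl,
                  List.cons_append, List.cons_append] at heq'
                exact ((List.cons.injEq _ _ _ _).mp heq').2
              have wB0' : deg zr + 1 = deg yr + 1 + wl B2' := by
                have e1 := deg_tle htl'
                have e2 := deg_rcJ (σ yr :: B2') (by simp)
                rw [deg_σ] at e1
                rw [wl_cons, deg_σ] at e2
                omega
              have hz : wl M2 = 0 ∧ wl B2' = 0 := by omega
              have hM2 : M2 = [] := wl_eq_zero hz.1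
              have hB2' : B2' = [] := wl_eq_zero hz.2
              subst hM2; subst hB2'
              simp only [List.nil_append] at hyr hινσ
              -- zr = yr
              have c1 : tle zr yr := tle_of_part_rcL (by rw [← hyr] at hpr; exact hpr)
              have c2 : tle yr zr := tle_σ_rev (by simpa using htl')
              have hzr : zr = yr := tle_antisymm zr yr c1 c2
              -- zl ∈ sum (node xl xr) yl
              have c3 : tle (over' (node xl xr) yl) zl := by
                apply tle_σ_rev
                have : part (rcL (σ zl)) (rcL (under (σ yl) (σ (node xl xr)))) := by
                  rw [rcL_under, hινσ]; exact hpr'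
                rw [← σ_over] at this
                exact tle_of_part_rcL this
              have c4 : tle zl (under (node xl xr) yl) := by
                have e : rcJ B0 = under (node xl xr) yl := by
                  rw [hB0eq, rcJ_append_last, rcT_rcL]
                rw [e] at htl
                exact htl
              exact ⟨zl, ⟨c3, c4⟩, by rw [hzr]⟩
        · left
          obtain ⟨he, h1, h2⟩ := inner_case xl xr yl yr zl zr B0 rest B0' rest' M
            hB0ne hB0'ne htl hpr htl' hpr' hxeq hresteq heq'
          exact ⟨zr, ⟨h1, h2⟩, by rw [he]⟩
  · rintro (⟨v, ⟨hv1, hv2⟩, rfl⟩ | ⟨v, ⟨hv1, hv2⟩, rfl⟩)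
    · constructor
      · exact (over_le_node xl xr (node yl yr)).trans (tle.node_right xl hv1)
      · show tle (node xl v) (node xl (under xr (node yl yr)))
        exact tle.node_right xl hv2
    · constructor
      · show tle (node (over' (node xl xr) yl) yr) (node v yr)
        exact tle.node_left yr hv1
      · exact (tle.node_left yr hv2).trans (node_le_under yl yr (node xl xr))
end

section
/- For all planar binary trees x = x^l ∨ x^r and y = y^l ∨ y^r, both different from the leaf |, the left and right sums are Tamari intervals: x ⊣ y = { z : x^l ∨ (x^r / y) ≤ z ≤ x \ y } and x ⊢ y = { z : x / y ≤ z ≤ (x \ y^l) ∨ y^r }. -/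
namespace PBT

lemma deg_tle_s6 {x y : PBT} (h : tle x y) : x.deg = y.deg := by
  induction h with
  | refl x => rfl
  | trans _ _ ih1 ih2 => omega
  | rotate x y z => simp [deg]; omega
  | node_left z _ ih => simp [deg]; omega
  | node_right z _ ih => simp [deg]; omega

/-- A strictly decreasing weight along rotations. -/
def w : PBT → ℕ
  | leaf => 0
  | node l r => w l + w r + l.deg

lemma w_tle {x y : PBT} (h : tle x y) : y.w ≤ x.w ∧ (y.w = x.w → x = y) := by
  induction h with
  | refl x => exact ⟨le_refl _, fun _ => rfl⟩
  | trans h1 h2 ih1 ih2 =>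
      refine ⟨le_trans ih2.1 ih1.1, fun he => ?_⟩
      have h1' : _ = _ := le_antisymm ih1.1 (he ▸ ih2.1)
      rw [ih1.2 h1', ih2.2 (by omega)]
  | rotate x y z =>
      constructor
      · simp [w, deg]; omega
      · intro he; simp [w, deg] at he; omega
  | node_left z h ih =>
      have hd := deg_tle_s6 h
      constructor
      · simp [w]; omega
      · intro he; simp [w] at he
        rw [ih.2 (by omega)]
  | node_right z h ih =>
      constructor
      · simp [w]; omega
      · intro he; simp [w] at he
        rw [ih.2 (by omega)]

lemma tle_antisymm_s6 {x y : PBT} (h1 : tle x y) (h2 : tle y x) : x = y :=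
  (w_tle h1).2 (le_antisymm (w_tle h1).1 (w_tle h2).1)

lemma tle_node_node {u v : PBT} (h : tle u v) :
    ∀ a b a' b', u = node a b → v = node a' b' →
      a'.deg ≤ a.deg ∧ (a'.deg = a.deg → tle a a' ∧ tle b b') := by
  induction h with
  | refl x =>
      rintro a b a' b' rfl h2
      injection h2 with e1 e2; subst e1; subst e2
      exact ⟨le_refl _, fun _ => ⟨tle.refl _, tle.refl _⟩⟩
  | trans h1 h2 ih1 ih2 =>
      rename_i x y z
      rintro a b a' b' rfl rfl
      have hy : y.deg = (node a b).deg := (deg_tle_s6 h1).symm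
      cases y with
      | leaf => simp [deg] at hy
      | node m1 m2 =>
          have H1 := ih1 a b m1 m2 rfl rfl
          have H2 := ih2 m1 m2 a' b' rfl rfl
          refine ⟨le_trans H2.1 H1.1, fun he => ?_⟩
          have e1 : m1.deg = a.deg := le_antisymm H1.1 (he ▸ H2.1)
          have c1 := H1.2 e1
          have c2 := H2.2 (by omega)
          exact ⟨tle.trans c1.1 c2.1, tle.trans c1.2 c2.2⟩
  | rotate x y z =>
      rintro a b a' b' h1 h2
      injection h1 with e1 e2; injection h2 with e3 e4
      subst e1; subst e2; subst e3; subst e4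
      constructor
      · simp [deg]; omega
      · intro he; simp [deg] at he; omega
  | node_left z h ih =>
      rintro a b a' b' h1 h2
      injection h1 with e1 e2; injection h2 with e3 e4
      subst e1; subst e2; subst e3; subst e4
      exact ⟨(deg_tle_s6 h).ge, fun _ => ⟨h, tle.refl _⟩⟩
  | node_right z h ih =>
      rintro a b a' b' h1 h2
      injection h1 with e1 e2; injection h2 with e3 e4
      subst e1; subst e2; subst e3; subst e4
      exact ⟨le_refl _, fun _ => ⟨tle.refl _, h⟩⟩

lemma deg_over (x y : PBT) : (over' x y).deg = x.deg + y.deg := by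
  induction y with
  | leaf => simp [over', deg]
  | node l r ihl ihr => simp [over', deg]; omega

lemma deg_under (x y : PBT) : (under x y).deg = x.deg + y.deg := by
  induction x with
  | leaf => simp [under, deg]
  | node l r ihl ihr => simp [under, deg]; omega

end PBT

open PBT in
/-- for `x = xˡ ∨ xʳ ≠ |` and `y = yˡ ∨ yʳ ≠ |`, the left and right
sums are the Tamari intervals
`x ⊣ y = [xˡ ∨ (xʳ / y), x \ y]` and `x ⊢ y = [x / y, (x \ yˡ) ∨ yʳ]`. -/
theorem lsum_rsum_intervals (xl xr yl yr : PBT) :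
    lsum (node xl xr) (node yl yr) =
      {z | tle (node xl (xr.over' (node yl yr))) z ∧
           tle z ((node xl xr).under (node yl yr))} ∧
    rsum (node xl xr) (node yl yr) =
      {z | tle ((node xl xr).over' (node yl yr)) z ∧
           tle z (node (((node xl xr).under yl)) yr)} := by
  constructor
  · ext z
    simp only [lsum, sum, under, Set.mem_image, Set.mem_setOf_eq]
    constructor
    · rintro ⟨w, ⟨hw1, hw2⟩, rfl⟩
      exact ⟨tle.node_right _ hw1, tle.node_right _ hw2⟩
    · rintro ⟨h1, h2⟩
      cases z with
      | leaf => have := deg_tle_s6 h1; simp [deg] at this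
      | node zl zr =>
          have H1 := tle_node_node h1 _ _ _ _ rfl rfl
          have H2 := tle_node_node h2 _ _ _ _ rfl rfl
          have e : zl.deg = xl.deg := le_antisymm H1.1 H2.1
          have c1 := H1.2 e
          have c2 := H2.2 e.symm
          have : zl = xl := (tle_antisymm_s6 c2.1 c1.1)
          subst this
          exact ⟨zr, ⟨c1.2, c2.2⟩, rfl⟩
  · ext z
    simp only [rsum, sum, over', Set.mem_image, Set.mem_setOf_eq]
    constructor
    · rintro ⟨w, ⟨hw1, hw2⟩, rfl⟩
      exact ⟨tle.node_left _ hw1, tle.node_left _ hw2⟩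
    · rintro ⟨h1, h2⟩
      cases z with
      | leaf => have := deg_tle_s6 h1; simp [deg] at this
      | node zl zr =>
          have H1 := tle_node_node h1 _ _ _ _ rfl rfl
          have H2 := tle_node_node h2 _ _ _ _ rfl rfl
          have e : ((node xl xr).over' yl).deg = ((node xl xr).under yl).deg := by
            rw [deg_over, deg_under]
          have e1 : zl.deg = ((node xl xr).over' yl).deg :=
            le_antisymm H1.1 (e ▸ H2.1)
          have c1 := H1.2 e1
          have c2 := H2.2 (by omega)
          have : zr = yr := (tle_antisymm_s6 c2.2 c1.2)
          subst this
          exact ⟨zl, ⟨c1.1, c2.1⟩, rfl⟩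
end
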